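/- Let A be an n×n real matrix (n ≥ 2) that is irreducible, entrywise nonnegative, symmetric and positive semidefinite, and let x ∈ ℝ^n have all entries positive. Let i_1 be a log-concavity index and i_2 a log-convexity index of A associated with x, and set g_k = (A^k x)_{i_1} and h_k = (A^k x)_{i_2} for k ≥ 0. Assume that every entry of the i_1-th row of A and every entry of the i_2-th row of A is positive, and that A^r x is not a Perron vector of A for any integer r ≥ 0. Then: (i) there exists k_1 ≥ 1 such that (a_k(A,x))_{k≥k_1} is strictly decreasing and g_{k−1} g_{k+1} < g_k² for all k ≥ k_1; (ii) there exists k_2 ≥ 1 such that (b_k(A,x))_{k≥k_2} is strictly increasing and h_{k−1} h_{k+1} > h_k² for all k ≥ k_2. -/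

import Mathlib

open Matrix

/-- A square matrix is irreducible if no permutation similarity puts it in block
upper triangular form; equivalently, for every nonempty proper subset `S` of indices
there are `i ∈ S` and `j ∉ S` with `A i j ≠ 0`. -/
def IsIrreducibleMatrix {n : ℕ} (A : Matrix (Fin n) (Fin n) ℝ) : Prop :=
  ∀ S : Finset (Fin n), S.Nonempty → S ≠ Finset.univ → ∃ i ∈ S, ∃ j, j ∉ S ∧ A i j ≠ 0

/-- The Perron value (spectral radius) of a real square matrix: the supremum of the
absolute values of its complex eigenvalues (roots of the characteristic polynomial). -/
noncomputable def perronValue {n : ℕ} (A : Matrix (Fin n) (Fin n) ℝ) : ℝ :=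
  sSup {r : ℝ | ∃ μ : ℂ, ((A.map Complex.ofReal).charpoly).IsRoot μ ∧ r = ‖μ‖}

/-- A Perron vector of `A`: an eigenvector associated with the Perron value of `A`. -/
def IsPerronVector {n : ℕ} (A : Matrix (Fin n) (Fin n) ℝ) (x : Fin n → ℝ) : Prop :=
  x ≠ 0 ∧ A.mulVec x = perronValue A • x

/-- `a_k(A,x) = max_i (A^k x)_i / (A^{k-1} x)_i` for `k ≥ 1`. -/
noncomputable def aSeq {n : ℕ} (A : Matrix (Fin n) (Fin n) ℝ) (x : Fin n → ℝ) (k : ℕ) : ℝ :=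
  ⨆ i, ((A ^ k).mulVec x i) / ((A ^ (k - 1)).mulVec x i)

/-- `b_k(A,x) = min_i (A^k x)_i / (A^{k-1} x)_i` for `k ≥ 1`. -/
noncomputable def bSeq {n : ℕ} (A : Matrix (Fin n) (Fin n) ℝ) (x : Fin n → ℝ) (k : ℕ) : ℝ :=
  ⨅ i, ((A ^ k).mulVec x i) / ((A ^ (k - 1)).mulVec x i)

/-- `i₀` is a log-concavity index of `A` associated with `x`: for all sufficiently large `k`,
the ratio `(A^k x)_{i₀} / (A^{k-1} x)_{i₀}` attains the maximum over all indices. -/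
def IsLogConcavityIndex {n : ℕ} (A : Matrix (Fin n) (Fin n) ℝ) (x : Fin n → ℝ)
    (i₀ : Fin n) : Prop :=
  ∃ K : ℕ, 0 < K ∧ ∀ k : ℕ, K ≤ k →
    ((A ^ k).mulVec x i₀) / ((A ^ (k - 1)).mulVec x i₀)
      = ⨆ i, ((A ^ k).mulVec x i) / ((A ^ (k - 1)).mulVec x i)

/-- `i₀` is a log-convexity index of `A` associated with `x`: for all sufficiently large `k`,
the ratio `(A^k x)_{i₀} / (A^{k-1} x)_{i₀}` attains the minimum over all indices. -/
def IsLogConvexityIndex {n : ℕ} (A : Matrix (Fin n) (Fin n) ℝ) (x : Fin n → ℝ)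
    (i₀ : Fin n) : Prop :=
  ∃ K : ℕ, 0 < K ∧ ∀ k : ℕ, K ≤ k →
    ((A ^ k).mulVec x i₀) / ((A ^ (k - 1)).mulVec x i₀)
      = ⨅ i, ((A ^ k).mulVec x i) / ((A ^ (k - 1)).mulVec x i)


namespace Statement14Aux

open Matrix Polynomial

lemma charpoly_root_complex {m : ℕ} (M : Matrix (Fin m) (Fin m) ℂ) (μ : ℂ) :
    M.charpoly.IsRoot μ ↔ ∃ w : Fin m → ℂ, w ≠ 0 ∧ M.mulVec w = μ • w := by
  have hmap : (Matrix.charmatrix M).map (Polynomial.evalRingHom μ)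
      = Matrix.diagonal (fun _ => μ) - M := by
    ext i j
    by_cases h : i = j <;>
      simp [h, Matrix.charmatrix_apply, Matrix.diagonal_apply, Matrix.sub_apply]
  have h1 : M.charpoly.eval μ = (Matrix.diagonal (fun _ => μ) - M).det := by
    have h0 := RingHom.map_det (Polynomial.evalRingHom μ) (Matrix.charmatrix M)
    rw [RingHom.mapMatrix_apply, hmap] at h0
    simpa [Matrix.charpoly] using h0
  have h2 : ∀ w : Fin m → ℂ,
      ((Matrix.diagonal (fun _ => μ) - M).mulVec w = 0 ↔ M.mulVec w = μ • w) := by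
    intro w
    rw [Matrix.sub_mulVec]
    constructor
    · intro h; funext i
      have hi : (Matrix.diagonal (fun _ => μ)).mulVec w i - M.mulVec w i = 0 := by
        have := congrFun h i; simpa using this
      have hi2 : μ * w i - M.mulVec w i = 0 := by
        simpa [Matrix.mulVec_diagonal] using hi
      show M.mulVec w i = μ * w i
      linear_combination -hi2
    · intro h; funext i
      have hi := congrFun h i
      simp only [Pi.smul_apply, smul_eq_mul] at hi
      simp only [Pi.sub_apply, Pi.zero_apply, Matrix.mulVec_diagonal]
      linear_combination -hi
  constructor
  · intro hroot
    have hdet : (Matrix.diagonal (fun _ => μ) - M).det = 0 := by rw [← h1]; exact hroot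
    obtain ⟨w, hw, hmul⟩ := Matrix.exists_mulVec_eq_zero_iff.mpr hdet
    exact ⟨w, hw, (h2 w).mp hmul⟩
  · rintro ⟨w, hw, hmul⟩
    have : (Matrix.diagonal (fun _ => μ) - M).det = 0 :=
      Matrix.exists_mulVec_eq_zero_iff.mp ⟨w, hw, (h2 w).mpr hmul⟩
    simpa [Polynomial.IsRoot, h1] using this

lemma perron_eq {n : ℕ} (hn : 2 ≤ n) (A : Matrix (Fin n) (Fin n) ℝ)
    (hsymm : Aᵀ = A) (hnonneg : ∀ i j, 0 ≤ A i j)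
    (v : Fin n → ℝ) (hv : ∀ i, 0 < v i) (t : ℝ)
    (heig : A.mulVec v = t • v) : perronValue A = t := by
  have i0 : Fin n := ⟨0, by omega⟩
  have hs : ∀ i j, A i j = A j i := fun i j => congrFun (congrFun hsymm j) i
  have hr : ∀ i, ∑ j, A i j * v j = t * v i := by
    intro i
    have := congrFun heig i
    simpa [Matrix.mulVec, dotProduct] using this
  have ht0 : 0 ≤ t := by
    have h1 : 0 ≤ ∑ j, A i0 j * v j :=
      Finset.sum_nonneg fun j _ => mul_nonneg (hnonneg i0 j) (hv j).le
    nlinarith [hr i0, hv i0]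
  have htmem : t ∈ {r : ℝ | ∃ μ : ℂ, ((A.map Complex.ofReal).charpoly).IsRoot μ ∧ r = ‖μ‖} := by
    refine ⟨(t : ℂ), ?_, by simp [Complex.norm_real, abs_of_nonneg ht0]⟩
    rw [charpoly_root_complex]
    refine ⟨fun i => (v i : ℂ), ?_, ?_⟩
    · intro h
      have := congrFun h i0
      simp at this
      exact (hv i0).ne' this
    · funext i
      have : ((∑ j, A i j * v j : ℝ) : ℂ) = ((t * v i : ℝ) : ℂ) := by
        exact_mod_cast congrArg Complex.ofReal (hr i)
      push_cast at this
      simpa [Matrix.mulVec, dotProduct, Matrix.map_apply] using this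
  have hub : ∀ r ∈ {r : ℝ | ∃ μ : ℂ, ((A.map Complex.ofReal).charpoly).IsRoot μ ∧ r = ‖μ‖},
      r ≤ t := by
    rintro r ⟨μ, hroot, rfl⟩
    obtain ⟨w, hw0, hww⟩ := (charpoly_root_complex _ μ).mp hroot
    set u : Fin n → ℝ := fun i => ‖w i‖ with hu
    have hu0 : ∀ i, 0 ≤ u i := fun i => norm_nonneg _
    have hineq : ∀ i, ‖μ‖ * u i ≤ ∑ j, A i j * u j := by
      intro i
      have h3 : μ * w i = ∑ j, (A i j : ℂ) * w j := by
        have := congrFun hww i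
        simp only [Pi.smul_apply, smul_eq_mul] at this
        rw [← this]
        simp [Matrix.mulVec, dotProduct, Matrix.map_apply]
      calc ‖μ‖ * u i = ‖μ * w i‖ := by simp [hu]
        _ = ‖∑ j, (A i j : ℂ) * w j‖ := by rw [h3]
        _ ≤ ∑ j, ‖(A i j : ℂ) * w j‖ := norm_sum_le _ _
        _ = ∑ j, A i j * u j := by
            refine Finset.sum_congr rfl fun j _ => ?_
            simp [hu, _root_.map_mul, Complex.norm_real, abs_of_nonneg (hnonneg i j)]
    have hcol : ∀ j, ∑ i, v i * A i j = t * v j := by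
      intro j
      calc ∑ i, v i * A i j = ∑ i, A j i * v i := by
            refine Finset.sum_congr rfl fun i _ => ?_
            rw [hs i j]; ring
        _ = t * v j := hr j
    have hpos : 0 < ∑ i, v i * u i := by
      obtain ⟨i1, hi1⟩ := Function.ne_iff.mp hw0
      refine Finset.sum_pos' (fun i _ => mul_nonneg (hv i).le (hu0 i)) ⟨i1, Finset.mem_univ _, ?_⟩
      exact mul_pos (hv i1) (by simpa [hu] using (norm_pos_iff.mpr hi1))
    have hsum : ‖μ‖ * ∑ i, v i * u i ≤ t * ∑ i, v i * u i := by
      calc ‖μ‖ * ∑ i, v i * u i = ∑ i, v i * (‖μ‖ * u i) := by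
            rw [Finset.mul_sum]; refine Finset.sum_congr rfl fun i _ => by ring
        _ ≤ ∑ i, v i * (∑ j, A i j * u j) :=
            Finset.sum_le_sum fun i _ => mul_le_mul_of_nonneg_left (hineq i) (hv i).le
        _ = ∑ j, (∑ i, v i * A i j) * u j := by
            simp_rw [Finset.mul_sum, Finset.sum_mul]
            rw [Finset.sum_comm]
            exact Finset.sum_congr rfl fun j _ => Finset.sum_congr rfl fun i _ => by ring
        _ = t * ∑ j, v j * u j := by
            rw [Finset.mul_sum]
            refine Finset.sum_congr rfl fun j _ => by rw [hcol j]; ring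
    exact le_of_mul_le_mul_right (by linarith [hsum]) hpos
  rw [perronValue]
  exact le_antisymm (csSup_le ⟨t, htmem⟩ hub) (le_csSup ⟨t, hub⟩ htmem)

lemma mulVec_pos {n : ℕ} (hn : 2 ≤ n) (A : Matrix (Fin n) (Fin n) ℝ)
    (hirr : IsIrreducibleMatrix A) (hnonneg : ∀ i j, 0 ≤ A i j)
    {y : Fin n → ℝ} (hy : ∀ i, 0 < y i) (i : Fin n) : 0 < A.mulVec y i := by
  have hS : ({i} : Finset (Fin n)) ≠ Finset.univ := by
    intro h
    have h2 := congrArg Finset.card h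
    simp [Finset.card_univ] at h2
    omega
  obtain ⟨i', hi', j, hj, hAij⟩ := hirr {i} ⟨i, Finset.mem_singleton_self i⟩ hS
  rw [Finset.mem_singleton] at hi'; subst hi'
  have hterm : 0 < A i' j * y j :=
    mul_pos (lt_of_le_of_ne (hnonneg i' j) (Ne.symm hAij)) (hy j)
  have hAv : A.mulVec y i' = ∑ j, A i' j * y j := by simp [Matrix.mulVec, dotProduct]
  rw [hAv]
  exact Finset.sum_pos' (fun j _ => mul_nonneg (hnonneg i' j) (hy j).le)
    ⟨j, Finset.mem_univ _, hterm⟩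

lemma pow_mulVec_pos {n : ℕ} (hn : 2 ≤ n) (A : Matrix (Fin n) (Fin n) ℝ) (x : Fin n → ℝ)
    (hirr : IsIrreducibleMatrix A) (hnonneg : ∀ i j, 0 ≤ A i j)
    (hx : ∀ i, 0 < x i) : ∀ k i, 0 < (A ^ k).mulVec x i := by
  intro k
  induction k with
  | zero => simpa [Matrix.one_mulVec] using hx
  | succ k ih =>
      intro i
      rw [pow_succ', ← Matrix.mulVec_mulVec]
      exact mulVec_pos hn A hirr hnonneg ih i

end Statement14Aux


namespace Statement14Aux

open Matrix

lemma max_half {n : ℕ} (hn : 2 ≤ n) (A : Matrix (Fin n) (Fin n) ℝ) (x : Fin n → ℝ)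
    (hirr : IsIrreducibleMatrix A) (hnonneg : ∀ i j, 0 ≤ A i j)
    (hsymm : Aᵀ = A) (hx : ∀ i, 0 < x i)
    (i₁ : Fin n) (hrow₁ : ∀ j, 0 < A i₁ j)
    (hnp : ∀ r : ℕ, ¬ IsPerronVector A ((A ^ r).mulVec x))
    (K₁ : ℕ) (hK₁pos : 0 < K₁)
    (hmax : ∀ k : ℕ, K₁ ≤ k →
      ((A ^ k).mulVec x i₁) / ((A ^ (k - 1)).mulVec x i₁)
        = ⨆ i, ((A ^ k).mulVec x i) / ((A ^ (k - 1)).mulVec x i)) :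
    ∃ k₁ : ℕ, 1 ≤ k₁ ∧
      (∀ k : ℕ, k₁ ≤ k → aSeq A x (k + 1) < aSeq A x k) ∧
      (∀ k : ℕ, k₁ ≤ k →
        (A ^ (k - 1)).mulVec x i₁ * (A ^ (k + 1)).mulVec x i₁ < ((A ^ k).mulVec x i₁) ^ 2) := by
  have hypos := pow_mulVec_pos hn A x hirr hnonneg hx
  have hdec : ∀ k, K₁ ≤ k → aSeq A x (k + 1) < aSeq A x k := by
    intro k hk
    have hk1 : 1 ≤ k := by omega
    have hkk : k - 1 + 1 = k := Nat.succ_pred_eq_of_pos hk1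
    have hstepk : (A ^ k).mulVec x = A.mulVec ((A ^ (k - 1)).mulVec x) := by
      rw [Matrix.mulVec_mulVec, ← pow_succ', hkk]
    have hub : ∀ j, (A ^ k).mulVec x j ≤ aSeq A x k * (A ^ (k - 1)).mulVec x j := by
      intro j
      have h1 : (A ^ k).mulVec x j / (A ^ (k - 1)).mulVec x j ≤ aSeq A x k := by
        unfold aSeq
        exact le_ciSup (f := fun i => (A ^ k).mulVec x i / (A ^ (k - 1)).mulVec x i)
          (Finite.bddAbove_range _) j
      exact (div_le_iff₀ (hypos (k - 1) j)).mp h1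
    have hex : ∃ j, (A ^ k).mulVec x j < aSeq A x k * (A ^ (k - 1)).mulVec x j := by
      by_contra hcon
      push_neg at hcon
      have heq : A.mulVec ((A ^ (k - 1)).mulVec x) = aSeq A x k • ((A ^ (k - 1)).mulVec x) := by
        funext j
        have h2 := le_antisymm (hub j) (hcon j)
        rw [← hstepk]
        simpa using h2
      refine hnp (k - 1) ⟨?_, ?_⟩
      · intro h0
        exact (hypos (k - 1) i₁).ne' (congrFun h0 i₁)
      · rw [perron_eq hn A hsymm hnonneg _ (hypos (k - 1)) _ heq]
        exact heq
    obtain ⟨j0, hj0⟩ := hex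
    have hstep1 : (A ^ (k + 1)).mulVec x = A.mulVec ((A ^ k).mulVec x) := by
      rw [Matrix.mulVec_mulVec, ← pow_succ']
    have hlt : (A ^ (k + 1)).mulVec x i₁ < aSeq A x k * (A ^ k).mulVec x i₁ := by
      rw [hstep1]
      have e1 : A.mulVec ((A ^ k).mulVec x) i₁ = ∑ j, A i₁ j * (A ^ k).mulVec x j := by
        simp [Matrix.mulVec, dotProduct]
      have e2 : aSeq A x k * (A ^ k).mulVec x i₁
          = ∑ j, A i₁ j * (aSeq A x k * (A ^ (k - 1)).mulVec x j) := by
        rw [hstepk]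
        have e3 : A.mulVec ((A ^ (k - 1)).mulVec x) i₁
            = ∑ j, A i₁ j * (A ^ (k - 1)).mulVec x j := by
          simp [Matrix.mulVec, dotProduct]
        rw [e3, Finset.mul_sum]
        exact Finset.sum_congr rfl fun j _ => by ring
      rw [e1, e2]
      exact Finset.sum_lt_sum (fun j _ => mul_le_mul_of_nonneg_left (hub j) (hnonneg i₁ j))
        ⟨j0, Finset.mem_univ _, mul_lt_mul_of_pos_left hj0 (hrow₁ j0)⟩
    have ha1 : aSeq A x (k + 1) = (A ^ (k + 1)).mulVec x i₁ / (A ^ k).mulVec x i₁ := by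
      have h4 := hmax (k + 1) (hk.trans (Nat.le_succ k))
      simpa [Nat.add_sub_cancel, aSeq] using h4.symm
    rw [ha1]
    exact (div_lt_iff₀ (hypos k i₁)).mpr hlt
  refine ⟨K₁, hK₁pos, hdec, ?_⟩
  intro k hk
  have hk1 : 1 ≤ k := by omega
  have hak : aSeq A x k = (A ^ k).mulVec x i₁ / (A ^ (k - 1)).mulVec x i₁ := (hmax k hk).symm
  have hak1 : aSeq A x (k + 1) = (A ^ (k + 1)).mulVec x i₁ / (A ^ k).mulVec x i₁ := by
    have h4 := hmax (k + 1) (hk.trans (Nat.le_succ k))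
    simpa [Nat.add_sub_cancel, aSeq] using h4.symm
  have hd := hdec k hk
  rw [hak, hak1, div_lt_div_iff₀ (hypos k i₁) (hypos (k - 1) i₁)] at hd
  nlinarith [hd]

lemma min_half {n : ℕ} (hn : 2 ≤ n) (A : Matrix (Fin n) (Fin n) ℝ) (x : Fin n → ℝ)
    (hirr : IsIrreducibleMatrix A) (hnonneg : ∀ i j, 0 ≤ A i j)
    (hsymm : Aᵀ = A) (hx : ∀ i, 0 < x i)
    (i₂ : Fin n) (hrow₂ : ∀ j, 0 < A i₂ j)
    (hnp : ∀ r : ℕ, ¬ IsPerronVector A ((A ^ r).mulVec x))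
    (K₂ : ℕ) (hK₂pos : 0 < K₂)
    (hmin : ∀ k : ℕ, K₂ ≤ k →
      ((A ^ k).mulVec x i₂) / ((A ^ (k - 1)).mulVec x i₂)
        = ⨅ i, ((A ^ k).mulVec x i) / ((A ^ (k - 1)).mulVec x i)) :
    ∃ k₂ : ℕ, 1 ≤ k₂ ∧
      (∀ k : ℕ, k₂ ≤ k → bSeq A x k < bSeq A x (k + 1)) ∧
      (∀ k : ℕ, k₂ ≤ k →
        ((A ^ k).mulVec x i₂) ^ 2 < (A ^ (k - 1)).mulVec x i₂ * (A ^ (k + 1)).mulVec x i₂) := by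
  have hypos := pow_mulVec_pos hn A x hirr hnonneg hx
  have hinc : ∀ k, K₂ ≤ k → bSeq A x k < bSeq A x (k + 1) := by
    intro k hk
    have hk1 : 1 ≤ k := by omega
    have hkk : k - 1 + 1 = k := Nat.succ_pred_eq_of_pos hk1
    have hstepk : (A ^ k).mulVec x = A.mulVec ((A ^ (k - 1)).mulVec x) := by
      rw [Matrix.mulVec_mulVec, ← pow_succ', hkk]
    have hlb : ∀ j, bSeq A x k * (A ^ (k - 1)).mulVec x j ≤ (A ^ k).mulVec x j := by
      intro j
      have h1 : bSeq A x k ≤ (A ^ k).mulVec x j / (A ^ (k - 1)).mulVec x j := by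
        unfold bSeq
        exact ciInf_le (Finite.bddBelow_range _) j
      exact (le_div_iff₀ (hypos (k - 1) j)).mp h1
    have hex : ∃ j, bSeq A x k * (A ^ (k - 1)).mulVec x j < (A ^ k).mulVec x j := by
      by_contra hcon
      push_neg at hcon
      have heq : A.mulVec ((A ^ (k - 1)).mulVec x) = bSeq A x k • ((A ^ (k - 1)).mulVec x) := by
        funext j
        have h2 := le_antisymm (hlb j) (hcon j)
        rw [← hstepk]
        simpa using h2.symm
      refine hnp (k - 1) ⟨?_, ?_⟩
      · intro h0
        exact (hypos (k - 1) i₂).ne' (congrFun h0 i₂)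
      · rw [perron_eq hn A hsymm hnonneg _ (hypos (k - 1)) _ heq]
        exact heq
    obtain ⟨j0, hj0⟩ := hex
    have hstep1 : (A ^ (k + 1)).mulVec x = A.mulVec ((A ^ k).mulVec x) := by
      rw [Matrix.mulVec_mulVec, ← pow_succ']
    have hlt : bSeq A x k * (A ^ k).mulVec x i₂ < (A ^ (k + 1)).mulVec x i₂ := by
      rw [hstep1]
      have e1 : A.mulVec ((A ^ k).mulVec x) i₂ = ∑ j, A i₂ j * (A ^ k).mulVec x j := by
        simp [Matrix.mulVec, dotProduct]
      have e2 : bSeq A x k * (A ^ k).mulVec x i₂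
          = ∑ j, A i₂ j * (bSeq A x k * (A ^ (k - 1)).mulVec x j) := by
        rw [hstepk]
        have e3 : A.mulVec ((A ^ (k - 1)).mulVec x) i₂
            = ∑ j, A i₂ j * (A ^ (k - 1)).mulVec x j := by
          simp [Matrix.mulVec, dotProduct]
        rw [e3, Finset.mul_sum]
        exact Finset.sum_congr rfl fun j _ => by ring
      rw [e1, e2]
      exact Finset.sum_lt_sum (fun j _ => mul_le_mul_of_nonneg_left (hlb j) (hnonneg i₂ j))
        ⟨j0, Finset.mem_univ _, mul_lt_mul_of_pos_left hj0 (hrow₂ j0)⟩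
    have hb1 : bSeq A x (k + 1) = (A ^ (k + 1)).mulVec x i₂ / (A ^ k).mulVec x i₂ := by
      have h4 := hmin (k + 1) (hk.trans (Nat.le_succ k))
      simpa [Nat.add_sub_cancel, bSeq] using h4.symm
    rw [hb1]
    exact (lt_div_iff₀ (hypos k i₂)).mpr hlt
  refine ⟨K₂, hK₂pos, hinc, ?_⟩
  intro k hk
  have hk1 : 1 ≤ k := by omega
  have hbk : bSeq A x k = (A ^ k).mulVec x i₂ / (A ^ (k - 1)).mulVec x i₂ := (hmin k hk).symm
  have hbk1 : bSeq A x (k + 1) = (A ^ (k + 1)).mulVec x i₂ / (A ^ k).mulVec x i₂ := by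
    have h4 := hmin (k + 1) (hk.trans (Nat.le_succ k))
    simpa [Nat.add_sub_cancel, bSeq] using h4.symm
  have hd := hinc k hk
  rw [hbk, hbk1, div_lt_div_iff₀ (hypos (k - 1) i₂) (hypos k i₂)] at hd
  nlinarith [hd]

end Statement14Aux

/-- Let `A` be `n × n` (`n ≥ 2`) irreducible, entrywise nonnegative,
symmetric positive semidefinite, `x` entrywise positive, `i₁` a log-concavity index and `i₂`
a log-convexity index of `A` associated with `x`; set `g k = (A^k x)_{i₁}`,
`h k = (A^k x)_{i₂}`. Assume rows `i₁` and `i₂` of `A` are entrywise positive and `A^r x`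
is not a Perron vector for any `r ≥ 0`. Then:
(i) there is `k₁ ≥ 1` such that `(a_k(A,x))_{k ≥ k₁}` is strictly decreasing and
`g (k-1) * g (k+1) < (g k)²` for all `k ≥ k₁`;
(ii) there is `k₂ ≥ 1` such that `(b_k(A,x))_{k ≥ k₂}` is strictly increasing and
`(h k)² < h (k-1) * h (k+1)` for all `k ≥ k₂`. -/
theorem strict_monotone_and_strict_log_behaviour {n : ℕ} (hn : 2 ≤ n)
    (A : Matrix (Fin n) (Fin n) ℝ) (x : Fin n → ℝ)
    (hirr : IsIrreducibleMatrix A) (hnonneg : ∀ i j, 0 ≤ A i j)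
    (hpsd : A.PosSemidef) (hx : ∀ i, 0 < x i)
    (i₁ i₂ : Fin n) (h₁ : IsLogConcavityIndex A x i₁) (h₂ : IsLogConvexityIndex A x i₂)
    (hrow₁ : ∀ j, 0 < A i₁ j) (hrow₂ : ∀ j, 0 < A i₂ j)
    (hnp : ∀ r : ℕ, ¬ IsPerronVector A ((A ^ r).mulVec x)) :
    (∃ k₁ : ℕ, 1 ≤ k₁ ∧
      (∀ k : ℕ, k₁ ≤ k → aSeq A x (k + 1) < aSeq A x k) ∧
      (∀ k : ℕ, k₁ ≤ k →
        (A ^ (k - 1)).mulVec x i₁ * (A ^ (k + 1)).mulVec x i₁ < ((A ^ k).mulVec x i₁) ^ 2)) ∧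
    (∃ k₂ : ℕ, 1 ≤ k₂ ∧
      (∀ k : ℕ, k₂ ≤ k → bSeq A x k < bSeq A x (k + 1)) ∧
      (∀ k : ℕ, k₂ ≤ k →
        ((A ^ k).mulVec x i₂) ^ 2 < (A ^ (k - 1)).mulVec x i₂ * (A ^ (k + 1)).mulVec x i₂)) := by
  obtain ⟨K₁, hK₁pos, hmax⟩ := h₁
  obtain ⟨K₂, hK₂pos, hmin⟩ := h₂
  have hsymm : Aᵀ = A := by
    have h := hpsd.1
    rwa [Matrix.IsHermitian, Matrix.conjTranspose_eq_transpose_of_trivial] at h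
  exact ⟨Statement14Aux.max_half hn A x hirr hnonneg hsymm hx i₁ hrow₁ hnp K₁ hK₁pos hmax,
    Statement14Aux.min_half hn A x hirr hnonneg hsymm hx i₂ hrow₂ hnp K₂ hK₂pos hmin⟩
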